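/- In a Bayesian principal-agent instance with ℓ types, n actions, and m outcomes, every vertex of every polytope P(a) = ∩_θ P(a_θ, θ) (over all action tuples a ∈ A^Θ) is the intersection of m hyperplanes drawn from a common family of at most ℓ·n² + m hyperplanes, so the union of all such vertex sets has cardinality at most C(ℓn² + m, m). -/

import Mathlib

open Finset Filter Module Submodule Topology

section general
variable {ι V : Type*} [AddCommGroup V] [Module ℝ V]

/-- At an extreme point, the active constraints have trivial common kernel. -/
lemma extreme_active [Finite ι] (f : ι → V →ₗ[ℝ] ℝ) (b : ι → ℝ) (σ : Set ι) {x : V}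
    (hx : x ∈ Set.extremePoints ℝ {p | ∀ j ∈ σ, b j ≤ f j p}) :
    ∀ v : V, (∀ j ∈ σ, f j x = b j → f j v = 0) → v = 0 := by
  intro v hv
  by_contra hv0
  have key : ∀ᶠ t : ℝ in 𝓝[>] (0:ℝ), ∀ j ∈ σ,
      b j ≤ f j (x + t • v) ∧ b j ≤ f j (x - t • v) := by
    rw [eventually_all_finite σ.toFinite]
    intro j hj
    by_cases hja : f j x = b j
    · filter_upwards with t
      simp [map_add, map_sub, map_smul, hv j hj hja, hja, smul_eq_mul, le_refl]
    · have hlt : b j < f j x := lt_of_le_of_ne (hx.1 j hj) (Ne.symm hja)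
      have h1 : Filter.Tendsto (fun t : ℝ => f j (x + t • v)) (𝓝[>] (0:ℝ)) (𝓝 (f j x)) := by
        have : Continuous (fun t : ℝ => f j x + t * f j v) :=
          continuous_const.add (continuous_id.mul continuous_const)
        have h2 := this.tendsto 0
        simp only [zero_mul, add_zero] at h2
        refine (h2.mono_left nhdsWithin_le_nhds).congr (fun t => ?_)
        simp [map_add, map_smul, smul_eq_mul]
      have h1' : Filter.Tendsto (fun t : ℝ => f j (x - t • v)) (𝓝[>] (0:ℝ)) (𝓝 (f j x)) := by
        have : Continuous (fun t : ℝ => f j x - t * f j v) :=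
          continuous_const.sub (continuous_id.mul continuous_const)
        have h2 := this.tendsto 0
        simp only [zero_mul, sub_zero] at h2
        refine (h2.mono_left nhdsWithin_le_nhds).congr (fun t => ?_)
        simp [map_sub, map_smul, smul_eq_mul]
      filter_upwards [h1.eventually_const_lt hlt, h1'.eventually_const_lt hlt] with t a b
      exact ⟨a.le, b.le⟩
  obtain ⟨t, ht, htpos⟩ := (key.and self_mem_nhdsWithin).exists
  have hmem1 : x + t • v ∈ {p | ∀ j ∈ σ, b j ≤ f j p} := fun j hj => (ht j hj).1
  have hmem2 : x - t • v ∈ {p | ∀ j ∈ σ, b j ≤ f j p} := fun j hj => (ht j hj).2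
  have hseg : x ∈ openSegment ℝ (x - t • v) (x + t • v) := by
    refine ⟨1/2, 1/2, by norm_num, by norm_num, by norm_num, ?_⟩
    rw [smul_sub, smul_add, ← add_assoc]
    abel_nf
    simp [smul_smul]
    module
  have := hx.2 hmem2 hmem1 hseg
  have : t • v = 0 := by
    have h := sub_eq_self.mp this
    exact h
  rcases smul_eq_zero.mp this with h | h
  · exact absurd h (ne_of_gt htpos)
  · exact hv0 h

/-- From a family of functionals with trivial common kernel one may extract
`finrank V` of them still having trivial common kernel. -/
lemma extract_subset [Fintype ι] [FiniteDimensional ℝ V]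
    (f : ι → V →ₗ[ℝ] ℝ) (T : Set ι) (hT : ∀ v : V, (∀ j ∈ T, f j v = 0) → v = 0) :
    ∃ S : Finset ι, S.card = finrank ℝ V ∧ ↑S ⊆ T ∧
      ∀ v : V, (∀ j ∈ S, f j v = 0) → v = 0 := by
  classical
  set W : Submodule ℝ (Module.Dual ℝ V) := span ℝ (f '' T) with hW
  have hWco : W.dualCoannihilator = ⊥ := by
    rw [eq_bot_iff]
    intro v hvmem
    have := Submodule.coe_dualCoannihilator_span (R := ℝ) (M := V) (f '' T)
    have hv : v ∈ {x : V | ∀ φ ∈ f '' T, φ x = 0} := by rw [← this]; exact hvmem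
    have : v = 0 := hT v (fun j hj => hv (f j) ⟨j, hj, rfl⟩)
    simp [this]
  have hWtop : W = ⊤ := by
    have := Subspace.dualCoannihilator_dualAnnihilator_eq (W := W)
    rw [← this, hWco, Submodule.dualAnnihilator_bot]
  obtain ⟨s, hsub, hspan, hli⟩ := exists_linearIndependent ℝ (f '' T)
  have hsfin : s.Finite := hli.setFinite
  haveI : Fintype s := hsfin.fintype
  have hspan' : span ℝ s = ⊤ := by rw [hspan, ← hW, hWtop]
  have hcard : s.toFinset.card = finrank ℝ V := by
    have h1 := finrank_span_set_eq_card hli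
    rw [hspan'] at h1
    rw [← h1, finrank_top, Subspace.dual_finrank_eq]
  have hex : ∀ φ : s, ∃ j, j ∈ T ∧ f j = (φ : Module.Dual ℝ V) := by
    rintro ⟨φ, hφ⟩
    obtain ⟨j, hj, hj2⟩ := hsub hφ
    exact ⟨j, hj, hj2⟩
  choose g hg1 hg2 using hex
  have hginj : Function.Injective g := by
    intro φ ψ h
    apply Subtype.ext
    rw [← hg2 φ, ← hg2 ψ, h]
  refine ⟨Finset.univ.image g, ?_, ?_, ?_⟩
  · rw [Finset.card_image_of_injective _ hginj, Finset.card_univ, ← hcard]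
    simp [Set.toFinset_card]
  · intro j hj
    simp only [Finset.coe_image, Set.mem_image] at hj
    obtain ⟨φ, _, rfl⟩ := hj
    exact hg1 φ
  · intro v hv
    have hvanish : ∀ φ ∈ s, (φ : Module.Dual ℝ V) v = 0 := by
      intro φ hφ
      have : f (g ⟨φ, hφ⟩) v = 0 := hv _ (Finset.mem_image_of_mem g (Finset.mem_univ _))
      rwa [hg2 ⟨φ, hφ⟩] at this
    have hall : ∀ ψ : Module.Dual ℝ V, ψ v = 0 := by
      intro ψ
      have hψ : ψ ∈ span ℝ s := by rw [hspan']; trivial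
      induction hψ using Submodule.span_induction with
      | mem φ hφ => exact hvanish _ hφ
      | zero => simp
      | add _ _ _ _ h1 h2 => simp [LinearMap.add_apply, h1, h2]
      | smul a _ _ h1 => simp [LinearMap.smul_apply, h1]
    exact (Module.forall_dual_apply_eq_zero_iff ℝ v).mp hall

end general


open Finset

/-- The set of contracts (nonnegative payment vectors) implementing the action `astar θ`
for every type `θ`. -/
def ICset {Θ A Ω : Type*} [Fintype Ω]
    (F : Θ → A → Ω → ℝ) (c : Θ → A → ℝ) (astar : Θ → A) : Set (Ω → ℝ) :=
  {p | (∀ ω, 0 ≤ p ω) ∧ ∀ θ a,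
    ∑ ω, p ω * F θ a ω - c θ a ≤ ∑ ω, p ω * F θ (astar θ) ω - c θ (astar θ)}

/-- The union over all action tuples of the vertex sets of the IC polytopes is finite,
of cardinality at most `C(ℓn² + m, m)` where `ℓ, n, m` are the numbers of types,
actions, and outcomes. -/
theorem stmt13 {Θ A Ω : Type*} [Fintype Θ] [Fintype A] [Fintype Ω]
    (F : Θ → A → Ω → ℝ) (hF : ∀ θ a ω, 0 ≤ F θ a ω) (hF1 : ∀ θ a, ∑ ω, F θ a ω = 1)
    (c : Θ → A → ℝ) (hc : ∀ θ a, 0 ≤ c θ a) :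
    (⋃ astar : Θ → A, Set.extremePoints ℝ (ICset F c astar)).Finite ∧
    (⋃ astar : Θ → A, Set.extremePoints ℝ (ICset F c astar)).ncard ≤
      (Fintype.card Θ * (Fintype.card A)^2 + Fintype.card Ω).choose (Fintype.card Ω) := by
  classical
  set ι := (Θ × A × A) ⊕ Ω with hι
  let f : ι → (Ω → ℝ) →ₗ[ℝ] ℝ := fun j =>
    Sum.rec (fun t => ∑ ω, (F t.1 t.2.1 ω - F t.1 t.2.2 ω) • (LinearMap.proj ω : (Ω → ℝ) →ₗ[ℝ] ℝ))
            (fun ω => LinearMap.proj ω) j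
  let b : ι → ℝ := fun j => Sum.rec (fun t => c t.1 t.2.1 - c t.1 t.2.2) (fun _ => 0) j
  have hf_inl : ∀ θ a a' (p : Ω → ℝ),
      f (Sum.inl (θ, a, a')) p = ∑ ω, (F θ a ω - F θ a' ω) * p ω := by
    intro θ a a' p
    simp [f, LinearMap.sum_apply, LinearMap.smul_apply, smul_eq_mul]
  have hf_inr : ∀ (ω : Ω) (p : Ω → ℝ), f (Sum.inr ω) p = p ω := fun ω p => rfl
  let σ : (Θ → A) → Set ι := fun astar =>
    {j | ∃ θ a, j = Sum.inl (θ, astar θ, a)} ∪ Set.range Sum.inr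
  have hICeq : ∀ astar, ICset F c astar = {p | ∀ j ∈ σ astar, b j ≤ f j p} := by
    intro astar
    ext p
    constructor
    · rintro ⟨hpos, hIC⟩ j hj
      rcases hj with hj | ⟨ω, rfl⟩
      · obtain ⟨θ, a, rfl⟩ := hj
        have h1 := hIC θ a
        rw [hf_inl]
        have h2 : ∑ ω, (F θ (astar θ) ω - F θ a ω) * p ω
            = ∑ ω, p ω * F θ (astar θ) ω - ∑ ω, p ω * F θ a ω := by
          rw [← Finset.sum_sub_distrib]
          exact Finset.sum_congr rfl fun ω _ => by ring
        show c θ (astar θ) - c θ a ≤ _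
        rw [h2]
        linarith
      · rw [hf_inr]
        exact hpos ω
    · intro h
      constructor
      · intro ω
        have := h (Sum.inr ω) (Or.inr ⟨ω, rfl⟩)
        rw [hf_inr] at this
        exact this
      · intro θ a
        have := h (Sum.inl (θ, astar θ, a)) (Or.inl ⟨θ, a, rfl⟩)
        rw [hf_inl] at this
        have h2 : ∑ ω, (F θ (astar θ) ω - F θ a ω) * p ω
            = ∑ ω, p ω * F θ (astar θ) ω - ∑ ω, p ω * F θ a ω := by
          rw [← Finset.sum_sub_distrib]
          exact Finset.sum_congr rfl fun ω _ => by ring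
        rw [h2] at this
        have h3 : c θ (astar θ) - c θ a ≤ _ := this
        linarith
  set U := ⋃ astar : Θ → A, Set.extremePoints ℝ (ICset F c astar) with hU
  have hm : finrank ℝ (Ω → ℝ) = Fintype.card Ω := Module.finrank_pi ℝ
  have hexS : ∀ x ∈ U, ∃ S : Finset ι, S.card = Fintype.card Ω ∧
      (∀ j ∈ S, f j x = b j) ∧ ∀ v : Ω → ℝ, (∀ j ∈ S, f j v = 0) → v = 0 := by
    intro x hxU
    obtain ⟨astar, hx⟩ := Set.mem_iUnion.mp hxU
    rw [hICeq astar] at hx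
    have hact := extreme_active f b (σ astar) hx
    obtain ⟨S, hcard, hsub, hker⟩ := extract_subset f {j ∈ σ astar | f j x = b j}
      (fun v hv => hact v (fun j hj hja => hv j ⟨hj, hja⟩))
    exact ⟨S, hcard.trans hm, fun j hj => (hsub hj).2, hker⟩
  choose! Φ hΦcard hΦtight hΦker using hexS
  have hinj : Set.InjOn Φ U := by
    intro x hx y hy hxy
    have hz : ∀ j ∈ Φ x, f j (x - y) = 0 := by
      intro j hj
      have h1 := hΦtight x hx j hj
      have h2 := hΦtight y hy j (hxy ▸ hj)
      simp [map_sub, h1, h2]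
    have := hΦker x hx (x - y) hz
    exact sub_eq_zero.mp this
  have hsubP : Φ '' U ⊆ ↑(Finset.powersetCard (Fintype.card Ω) (Finset.univ : Finset ι)) := by
    rintro S ⟨x, hx, rfl⟩
    rw [Finset.mem_coe]
    exact Finset.mem_powersetCard_univ.mpr (hΦcard x hx)
  have hfinU : U.Finite :=
    Set.Finite.of_finite_image (Set.Finite.subset (Finset.finite_toSet _) hsubP) hinj
  refine ⟨hfinU, ?_⟩
  have hcardι : Fintype.card ι = Fintype.card Θ * (Fintype.card A)^2 + Fintype.card Ω := by
    simp [hι, Fintype.card_sum, Fintype.card_prod, sq]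
  calc U.ncard = (Φ '' U).ncard := (Set.ncard_image_of_injOn hinj).symm
    _ ≤ (↑(Finset.powersetCard (Fintype.card Ω) (Finset.univ : Finset ι)) : Set (Finset ι)).ncard :=
        Set.ncard_le_ncard hsubP (Finset.finite_toSet _)
    _ = (Fintype.card ι).choose (Fintype.card Ω) := by
        rw [Set.ncard_coe_finset, Finset.card_powersetCard, Finset.card_univ]
    _ = _ := by rw [hcardι]
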